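/- Let Λ = kQ/I be a monomial path algebra and μ a nonzero path of length at least 1. If μ has no right completion, then the right Λ-module μΛ is projective; conversely, if μΛ is projective then μ has no right completion. -/

import Mathlib

open DirectSum

noncomputable section

/-! ### Homological invariants over a ring -/

section Homological

variable (R : Type) [Ring R]

/-- `K` is a direct summand of `L`. -/
def IsSummandOf (K L : ModuleCat.{0} R) : Prop :=
  ∃ (i : K →ₗ[R] L) (p : L →ₗ[R] K), p.comp i = LinearMap.id

/-- `K` is a direct summand of `L` up to projective summands (i.e. in the stable sense). -/
def IsStableSummandOf (K L : ModuleCat.{0} R) : Prop :=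
  ∃ P : ModuleCat.{0} R, Module.Projective R P ∧
    IsSummandOf R K (ModuleCat.of R (↥L × ↥P))

/-- `K` is the (minimal) first syzygy of `M`: the kernel of a projective cover `P ↠ M`. -/
def IsMinSyzygyOf (K M : ModuleCat.{0} R) : Prop :=
  ∃ (P : ModuleCat.{0} R) (f : P →ₗ[R] M) (g : K →ₗ[R] P),
    Module.Projective R P ∧ Function.Surjective f ∧ Function.Injective g ∧
    LinearMap.range g = LinearMap.ker f ∧
    (∀ X : Submodule R ↥P, LinearMap.ker f ⊔ X = ⊤ → X = ⊤)

/-- `K` is an `n`-th (minimal) syzygy of `M`. -/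
inductive IsNthSyzygyOf : ℕ → ModuleCat.{0} R → ModuleCat.{0} R → Prop
  | zero (K M : ModuleCat.{0} R) : Nonempty (K ≃ₗ[R] M) → IsNthSyzygyOf 0 K M
  | succ (n : ℕ) (K L M : ModuleCat.{0} R) :
      IsNthSyzygyOf n K L → IsMinSyzygyOf R L M → IsNthSyzygyOf (n + 1) K M

/-- Projective dimension, valued in `ℕ∞`. -/
def pdim (M : ModuleCat.{0} R) : ℕ∞ :=
  sInf ((fun n : ℕ => (n : ℕ∞)) ''
    {n : ℕ | ∃ K : ModuleCat.{0} R, IsNthSyzygyOf R n K M ∧ Module.Projective R K})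

/-- The `k`-delooping level of a module:
`inf { n | Ωⁿ M is a direct summand of Ωⁿ⁺ᵏ N for some N }`. -/
def kdell (k : ℕ) (M : ModuleCat.{0} R) : ℕ∞ :=
  sInf ((fun n : ℕ => (n : ℕ∞)) '' {n : ℕ | ∃ K L N : ModuleCat.{0} R,
    IsNthSyzygyOf R n K M ∧ IsNthSyzygyOf R (n + k) L N ∧ IsStableSummandOf R K L})

/-- The delooping level of a module. -/
def dellMod (M : ModuleCat.{0} R) : ℕ∞ := kdell R 1 M

/-- The delooping level of an algebra: the sup over simple modules. -/
def dellAlg : ℕ∞ :=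
  ⨆ S : {S : ModuleCat.{0} R // IsSimpleModule R S}, dellMod R S.1

/-- The derived delooping level of a module. -/
def ddellMod (M : ModuleCat.{0} R) : ℕ∞ :=
  sInf ((fun m : ℕ => (m : ℕ∞)) '' {m : ℕ | ∃ n, n ≤ m ∧ ∃ (C : ℕ → ModuleCat.{0} R)
    (d : ∀ i : ℕ, C (i + 1) →ₗ[R] C i) (f : C 0 →ₗ[R] M),
    (∀ i, i ≤ n → Module.Finite R (C i)) ∧
    (∀ i, n < i → Subsingleton (C i)) ∧
    Function.Surjective f ∧
    LinearMap.ker f = LinearMap.range (d 0) ∧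
    (∀ i, LinearMap.ker (d i) = LinearMap.range (d (i + 1))) ∧
    (∀ i, i ≤ n → kdell R (i + 1) (C i) ≤ ((m - i : ℕ) : ℕ∞))})

/-- The derived delooping level of an algebra. -/
def ddellAlg : ℕ∞ :=
  ⨆ S : {S : ModuleCat.{0} R // IsSimpleModule R S}, ddellMod R S.1

/-- The sub-derived delooping level of a module: `inf { dell N | M ↪ N }`. -/
def subddellMod (M : ModuleCat.{0} R) : ℕ∞ :=
  sInf {d : ℕ∞ | ∃ N : ModuleCat.{0} R,
    (∃ f : M →ₗ[R] N, Function.Injective f) ∧ d = dellMod R N}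

/-- The sub-derived delooping level of an algebra. -/
def subddellAlg : ℕ∞ :=
  ⨆ S : {S : ModuleCat.{0} R // IsSimpleModule R S}, subddellMod R S.1

/-- The big finitistic dimension. -/
def bigFindim : ℕ∞ :=
  ⨆ M : {M : ModuleCat.{0} R // pdim R M ≠ ⊤}, pdim R M.1

/-- The little finitistic dimension. -/
def littleFindim : ℕ∞ :=
  ⨆ M : {M : ModuleCat.{0} R // Module.Finite R M ∧ pdim R M ≠ ⊤}, pdim R M.1

/-- The global dimension. -/
def gdim : ℕ∞ := ⨆ M : ModuleCat.{0} R, pdim R M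

/-- A module is uniserial if its submodules are totally ordered by inclusion. -/
def IsUniserialMod (M : Type) [AddCommGroup M] [Module R M] : Prop :=
  ∀ N₁ N₂ : Submodule R M, N₁ ≤ N₂ ∨ N₂ ≤ N₁

/-- A module is indecomposable. -/
def IsIndecompMod (M : Type) [AddCommGroup M] [Module R M] : Prop :=
  Nontrivial M ∧ ∀ N₁ N₂ : Submodule R M, IsCompl N₁ N₂ → N₁ = ⊥ ∨ N₂ = ⊥

end Homological

/-! ### Quivers, paths, monomial algebras -/

/-- A quiver (directed multigraph). -/
structure Quiv : Type 1 where
  V : Type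
  E : Type
  s : E → V
  t : E → V

/-- A path in a quiver: a source vertex together with a composable list of arrows. -/
structure QPath (Q : Quiv) where
  src : Q.V
  es : List Q.E
  chain : es.Chain' fun e f => Q.t e = Q.s f
  hsrc : ∀ e ∈ es.head?, Q.s e = src

/-- The target of a path. -/
def QPath.tgt {Q : Quiv} (p : QPath Q) : Q.V := p.es.getLast?.elim p.src Q.t

/-- The trivial path at a vertex. -/
def QPath.triv (Q : Quiv) (v : Q.V) : QPath Q :=
  ⟨v, [], List.IsChain.nil, by intro e he; simp at he⟩

/-- `r` is the concatenation of `p` followed by `q`. -/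
def QConcat {Q : Quiv} (p q r : QPath Q) : Prop :=
  p.tgt = q.src ∧ r.src = p.src ∧ r.es = p.es ++ q.es

/-- `q` is a (not necessarily proper) subpath of `p`. -/
def QSubpath {Q : Quiv} (q p : QPath Q) : Prop :=
  ∃ u x w, QConcat u q x ∧ QConcat x w p

/-- The opposite quiver. -/
def Quiv.op (Q : Quiv) : Quiv := ⟨Q.V, Q.E, Q.t, Q.s⟩

/-- `q` is the reverse of `p` in the opposite quiver. -/
def QRev {Q : Quiv} (p : QPath Q) (q : QPath Q.op) : Prop :=
  q.src = p.tgt ∧ q.es = p.es.reverse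

/-- A quiver is acyclic if it has no nontrivial oriented cycle. -/
def QuivAcyclic (Q : Quiv) : Prop := ∀ p : QPath Q, p.es ≠ [] → p.src ≠ p.tgt

/-- The cyclic part of a quiver: vertices lying on an oriented cycle. -/
def CyclicPart (Q : Quiv) : Set Q.V :=
  {v | ∃ p : QPath Q, p.es ≠ [] ∧ p.src = v ∧ p.tgt = v}

/-- The set of vertices visited by a path. -/
def QPath.verts {Q : Quiv} (p : QPath Q) : Set Q.V :=
  insert p.src {v | ∃ e ∈ p.es, Q.s e = v ∨ Q.t e = v}

/-- The data exhibiting `Λ` as the monomial path algebra `kQ/I`, where the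
admissible ideal `I` is the span of the set `Z` of zero paths. -/
structure MonomialStructure (k : Type) [Field k] (Q : Quiv) (Λ : Type) [Ring Λ]
    [Algebra k Λ] where
  /-- the set of zero paths, i.e. the paths lying in the monomial ideal `I` -/
  Z : Set (QPath Q)
  z_len : ∀ p ∈ Z, 2 ≤ p.es.length
  z_saturated : ∀ p r : QPath Q, p ∈ Z → QSubpath p r → r ∈ Z
  admissible : ∃ N : ℕ, ∀ p : QPath Q, N ≤ p.es.length → p ∈ Z
  finV : Fintype Q.V
  finE : Finite Q.E
  /-- the nonzero paths form a `k`-basis of `Λ` -/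
  basis : Module.Basis {p : QPath Q // p ∉ Z} k Λ
  mul_concat_nz : ∀ (p q : {p : QPath Q // p ∉ Z}) (r : QPath Q), QConcat p.1 q.1 r →
    ∀ h : r ∉ Z, basis p * basis q = basis ⟨r, h⟩
  mul_concat_z : ∀ (p q : {p : QPath Q // p ∉ Z}) (r : QPath Q), QConcat p.1 q.1 r →
    r ∈ Z → basis p * basis q = 0
  mul_noncomp : ∀ p q : {p : QPath Q // p ∉ Z}, p.1.tgt ≠ q.1.src → basis p * basis q = 0
  triv_nz : ∀ v : Q.V, QPath.triv Q v ∉ Z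
  one_eq : 1 = ∑ v ∈ (@Finset.univ Q.V finV), basis ⟨QPath.triv Q v, triv_nz v⟩

/-- `β` is a right completion of `α` with respect to the set of zero paths `Z`. -/
def IsRightCompletion {Q : Quiv} (Z : Set (QPath Q)) (α β : QPath Q) : Prop :=
  β ∉ Z ∧ (∃ r, QConcat α β r ∧ r ∈ Z) ∧
  ∀ β₁ β₂ : QPath Q, QConcat β₁ β₂ β → β₂.es ≠ [] → ∃ r, QConcat α β₁ r ∧ r ∉ Z

/-- The set of zero paths of the opposite algebra: reverses of zero paths. -/
def ZOp {Q : Quiv} (Z : Set (QPath Q)) : Set (QPath Q.op) := {q | ∃ p ∈ Z, QRev p q}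

/-- A minimal relation: a zero path all of whose proper subpaths are nonzero. -/
def IsMinRel {Q : Quiv} (Z : Set (QPath Q)) (p : QPath Q) : Prop :=
  p ∈ Z ∧ ∀ q : QPath Q, QSubpath q p → q ∈ Z → q = p

/-- Left multiplication by `a`, as an endomorphism of `Λ` as a right `Λ`-module. -/
def leftMulMap (Λ : Type) [Ring Λ] (a : Λ) : Λ →ₗ[Λᵐᵒᵖ] Λ where
  toFun x := a * x
  map_add' x y := mul_add a x y
  map_smul' r x := by
    simp only [MulOpposite.smul_eq_mul_unop, RingHom.id_apply, mul_assoc]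

/-- The right ideal `pΛ` generated by a nonzero path `p`, as a right `Λ`-module. -/
def pathRightIdeal {k : Type} [Field k] {Q : Quiv} {Λ : Type} [Ring Λ] [Algebra k Λ]
    (MS : MonomialStructure k Q Λ) (p : {p : QPath Q // p ∉ MS.Z}) :
    ModuleCat.{0} Λᵐᵒᵖ :=
  ModuleCat.of Λᵐᵒᵖ ↥(Submodule.span Λᵐᵒᵖ {MS.basis p})

/-- The cyclic right `Λ`-module `Λ/pΛ`. -/
def quotByPath {k : Type} [Field k] {Q : Quiv} {Λ : Type} [Ring Λ] [Algebra k Λ]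
    (MS : MonomialStructure k Q Λ) (p : {p : QPath Q // p ∉ MS.Z}) :
    ModuleCat.{0} Λᵐᵒᵖ :=
  ModuleCat.of Λᵐᵒᵖ (Λ ⧸ (Submodule.span Λᵐᵒᵖ {MS.basis p}))

/-! ### Undirected walks and cycles in a quiver -/

/-- A step in the underlying undirected graph of a quiver: an arrow traversed
forwards or backwards. -/
inductive QStep (Q : Quiv) : Q.V → Q.V → Type
  | fwd (e : Q.E) : QStep Q (Q.s e) (Q.t e)
  | bwd (e : Q.E) : QStep Q (Q.t e) (Q.s e)

/-- The underlying arrow of a step. -/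
def QStep.edge {Q : Quiv} : ∀ {a b : Q.V}, QStep Q a b → Q.E
  | _, _, .fwd e => e
  | _, _, .bwd e => e

/-- Whether a step traverses its arrow forwards. -/
def QStep.IsFwd {Q : Quiv} : ∀ {a b : Q.V}, QStep Q a b → Prop
  | _, _, .fwd _ => True
  | _, _, .bwd _ => False

/-- A walk in the underlying undirected graph of a quiver. -/
inductive UWalk (Q : Quiv) : Q.V → Q.V → Type
  | nil (a : Q.V) : UWalk Q a a
  | cons {a b c : Q.V} : QStep Q a b → UWalk Q b c → UWalk Q a c

/-- The list of arrows used by a walk. -/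
def UWalk.edges {Q : Quiv} : ∀ {a b : Q.V}, UWalk Q a b → List Q.E
  | _, _, .nil _ => []
  | _, _, .cons st w => st.edge :: w.edges

/-- The list of vertices of a walk, excluding the final endpoint. -/
def UWalk.innerVerts {Q : Quiv} : ∀ {a b : Q.V}, UWalk Q a b → List Q.V
  | _, _, .nil _ => []
  | a, _, .cons _ w => a :: w.innerVerts

/-- All steps of the walk traverse their arrow forwards. -/
def UWalk.AllFwd {Q : Quiv} : ∀ {a b : Q.V}, UWalk Q a b → Prop
  | _, _, .nil _ => True
  | _, _, .cons st w => st.IsFwd ∧ w.AllFwd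

/-- All steps of the walk traverse their arrow backwards. -/
def UWalk.AllBwd {Q : Quiv} : ∀ {a b : Q.V}, UWalk Q a b → Prop
  | _, _, .nil _ => True
  | _, _, .cons st w => ¬ st.IsFwd ∧ w.AllBwd

/-- A closed walk is a cycle if it is nonempty, repeats no arrow, and repeats no
vertex other than the endpoint. -/
def UWalk.IsCycle {Q : Quiv} {a : Q.V} (w : UWalk Q a a) : Prop :=
  w.edges ≠ [] ∧ w.edges.Nodup ∧ w.innerVerts.Nodup

/-- A walk is oriented if all its arrows point in the same direction. -/
def UWalk.Oriented {Q : Quiv} {a b : Q.V} (w : UWalk Q a b) : Prop :=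
  w.AllFwd ∨ w.AllBwd

/-- A quiver is connected if any two vertices are joined by an undirected walk. -/
def QuivConnected (Q : Quiv) : Prop := ∀ a b : Q.V, Nonempty (UWalk Q a b)

end

/-! ### Auxiliary lemmas for the proof of `stmt_4` -/

section StmtFourAux

variable {Q : Quiv}

theorem QPath.ext' {p q : QPath Q} (h1 : p.src = q.src) (h2 : p.es = q.es) : p = q := by
  cases p; cases q
  cases h1; cases h2
  rfl

theorem QPath.tgt_eq_src_of_nil {p : QPath Q} (h : p.es = []) : p.tgt = p.src := by
  show p.es.getLast?.elim p.src Q.t = p.src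
  rw [h]
  rfl

/-- Concatenation of composable paths. -/
def QPath.comp (p q : QPath Q) (h : p.tgt = q.src) : QPath Q where
  src := p.src
  es := p.es ++ q.es
  chain := by
    refine p.chain.append q.chain ?_
    intro x hx y hy
    rw [q.hsrc y hy, ← h]
    rw [Option.mem_def] at hx
    show Q.t x = p.es.getLast?.elim p.src Q.t
    rw [hx]
    rfl
  hsrc := by
    intro e he
    rcases hp : p.es with _ | ⟨a, t⟩
    · rw [hp, List.nil_append] at he
      rw [q.hsrc e he, ← h, QPath.tgt_eq_src_of_nil hp]
    · rw [hp, List.cons_append, List.head?_cons, Option.mem_def,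
        Option.some.injEq] at he
      subst he
      exact p.hsrc _ (by rw [hp]; rfl)

theorem QConcat_comp (p q : QPath Q) (h : p.tgt = q.src) : QConcat p q (p.comp q h) :=
  ⟨h, rfl, rfl⟩

theorem QPath.comp_es (p q : QPath Q) (h : p.tgt = q.src) :
    (p.comp q h).es = p.es ++ q.es := rfl

/-- If a path has no right completion, then concatenating it with any nonzero
composable path yields a nonzero path. -/
theorem no_completion_key {Z : Set (QPath Q)}
    (hsat : ∀ p r : QPath Q, p ∈ Z → QSubpath p r → r ∈ Z)
    (μ : QPath Q) (hμz : μ ∉ Z) (hnc : ¬ ∃ β : QPath Q, IsRightCompletion Z μ β) :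
    ∀ p : QPath Q, p ∉ Z → ∀ h : μ.tgt = p.src, μ.comp p h ∉ Z := by
  classical
  suffices H : ∀ n (p : QPath Q), p.es.length ≤ n → p ∉ Z → ∀ h : μ.tgt = p.src,
      μ.comp p h ∉ Z by
    exact fun p hp h => H p.es.length p le_rfl hp h
  intro n
  induction n with
  | zero =>
    intro p hlen hp h
    have h0 : p.es = [] := List.length_eq_zero_iff.mp (Nat.le_zero.mp hlen)
    have : μ.comp p h = μ := QPath.ext' rfl (by
      show μ.es ++ p.es = μ.es
      rw [h0, List.append_nil])
    rw [this]
    exact hμz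
  | succ n ih =>
    intro p hlen hp h hcontra
    by_cases hall : ∀ p₁ p₂ : QPath Q, QConcat p₁ p₂ p → p₂.es ≠ [] →
        ∀ h₁ : μ.tgt = p₁.src, μ.comp p₁ h₁ ∉ Z
    · refine hnc ⟨p, hp, ⟨μ.comp p h, QConcat_comp μ p h, hcontra⟩, ?_⟩
      intro β₁ β₂ hc hne
      exact ⟨μ.comp β₁ (h.trans hc.2.1), QConcat_comp _ _ _, hall β₁ β₂ hc hne _⟩
    · push_neg at hall
      obtain ⟨p₁, p₂, hc, hne, h₁, hz⟩ := hall
      have hp₁ : p₁ ∉ Z := by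
        intro hmem
        exact hp (hsat p₁ p hmem ⟨QPath.triv Q p₁.src, p₁, p₂, ⟨rfl, rfl, rfl⟩, hc⟩)
      have hlen₁ : p₁.es.length ≤ n := by
        have hes := congrArg List.length hc.2.2
        rw [List.length_append] at hes
        have h2 : p₂.es.length ≠ 0 := fun c => hne (List.length_eq_zero_iff.mp c)
        omega
      exact ih p₁ hlen₁ hp₁ h₁ hz

theorem leftMulMap_apply (Λ : Type) [Ring Λ] (a x : Λ) : leftMulMap Λ a x = a * x := rfl

end StmtFourAux

/-- Over a monomial algebra, a nonzero path `μ` of length at least 1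
has no right completion if and only if the right module `μΛ` is projective. -/

theorem stmt_4 (k : Type) [Field k] (Q : Quiv) (Λ : Type) [Ring Λ] [Algebra k Λ]
    (MS : MonomialStructure k Q Λ) (μ : QPath Q) (hμz : μ ∉ MS.Z)
    (hμl : 1 ≤ μ.es.length) :
    (¬ ∃ β : QPath Q, IsRightCompletion MS.Z μ β) ↔
      Module.Projective Λᵐᵒᵖ
        ↥(Submodule.span Λᵐᵒᵖ ({MS.basis ⟨μ, hμz⟩} : Set Λ)) := by
  classical
  set μb : Λ := MS.basis ⟨μ, hμz⟩ with hμbdef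
  set e : Λ := MS.basis ⟨QPath.triv Q μ.tgt, MS.triv_nz μ.tgt⟩ with hedef
  -- basic multiplication facts
  have hee : e * e = e :=
    MS.mul_concat_nz ⟨QPath.triv Q μ.tgt, MS.triv_nz μ.tgt⟩
      ⟨QPath.triv Q μ.tgt, MS.triv_nz μ.tgt⟩ (QPath.triv Q μ.tgt)
      ⟨rfl, rfl, rfl⟩ (MS.triv_nz μ.tgt)
  have hμe : μb * e = μb :=
    MS.mul_concat_nz ⟨μ, hμz⟩ ⟨QPath.triv Q μ.tgt, MS.triv_nz μ.tgt⟩ μ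
      ⟨rfl, rfl, (List.append_nil μ.es).symm⟩ hμz
  have heP : ∀ p : {p : QPath Q // p ∉ MS.Z}, p.1.src = μ.tgt →
      e * MS.basis p = MS.basis p := by
    intro p hp
    exact MS.mul_concat_nz ⟨QPath.triv Q μ.tgt, MS.triv_nz μ.tgt⟩ p p.1
      ⟨hp.symm, hp, rfl⟩ p.2
  have heP0 : ∀ p : {p : QPath Q // p ∉ MS.Z}, p.1.src ≠ μ.tgt →
      e * MS.basis p = 0 := by
    intro p hp
    exact MS.mul_noncomp ⟨QPath.triv Q μ.tgt, MS.triv_nz μ.tgt⟩ p (fun c => hp c.symm)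
  -- membership facts
  have hMmem : ∀ x : Λ, μb * x ∈ Submodule.span Λᵐᵒᵖ ({μb} : Set Λ) := fun x =>
    Submodule.mem_span_singleton.mpr ⟨MulOpposite.op x, rfl⟩
  have hEmem : ∀ x : Λ, e * x ∈ Submodule.span Λᵐᵒᵖ ({e} : Set Λ) := fun x =>
    Submodule.mem_span_singleton.mpr ⟨MulOpposite.op x, rfl⟩
  have hEfix : ∀ y ∈ Submodule.span Λᵐᵒᵖ ({e} : Set Λ), e * y = y := by
    intro y hy
    obtain ⟨c, rfl⟩ := Submodule.mem_span_singleton.mp hy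
    rw [MulOpposite.smul_eq_mul_unop, ← mul_assoc, hee]
  -- a linear functional trick: evaluate the `j`-coordinate of `F x`
  have functional_eq : ∀ (F G : Λ →ₗ[k] Λ) (j j' : {p : QPath Q // p ∉ MS.Z}),
      (∀ p, MS.basis.repr (F (MS.basis p)) j = MS.basis.repr (G (MS.basis p)) j') →
      ∀ x, MS.basis.repr (F x) j = MS.basis.repr (G x) j' := by
    intro F G j j' h x
    have h2 : (Finsupp.lapply j).comp (MS.basis.repr.toLinearMap.comp F) =
        (Finsupp.lapply j').comp (MS.basis.repr.toLinearMap.comp G) :=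
      MS.basis.ext (fun p => by simpa using h p)
    simpa using DFunLike.congr_fun h2 x
  constructor
  · -- no right completion → projective
    intro hnc
    have hkey : ∀ p : {p : QPath Q // p ∉ MS.Z}, ∀ h : μ.tgt = p.1.src,
        μ.comp p.1 h ∉ MS.Z :=
      fun p h => no_completion_key MS.z_saturated μ hμz hnc p.1 p.2 h
    have hμP : ∀ p : {p : QPath Q // p ∉ MS.Z}, ∀ h : μ.tgt = p.1.src,
        μb * MS.basis p = MS.basis ⟨μ.comp p.1 h, hkey p h⟩ :=
      fun p h => MS.mul_concat_nz ⟨μ, hμz⟩ p (μ.comp p.1 h) (QConcat_comp μ p.1 h) _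
    -- injectivity of left multiplication by μb on eΛ
    have hinj : ∀ y : Λ, e * y = y → μb * y = 0 → y = 0 := by
      intro y hy1 hy2
      refine MS.basis.ext_elem_iff.mpr fun i => ?_
      rw [map_zero, Finsupp.zero_apply]
      by_cases hsrc : i.1.src = μ.tgt
      · have h1 := functional_eq (LinearMap.mulLeft k μb) (LinearMap.mulLeft k e)
          ⟨μ.comp i.1 hsrc.symm, hkey i hsrc.symm⟩ i ?_ y
        · simp only [LinearMap.mulLeft_apply] at h1
          rw [hy1, hy2, map_zero, Finsupp.zero_apply] at h1
          exact h1.symm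
        · intro p
          simp only [LinearMap.mulLeft_apply]
          by_cases hp : p.1.src = μ.tgt
          · rw [hμP p hp.symm, heP p hp, Module.Basis.repr_self, Module.Basis.repr_self,
              Finsupp.single_apply, Finsupp.single_apply]
            have hiff : (⟨μ.comp p.1 hp.symm, hkey p hp.symm⟩ :
                {p : QPath Q // p ∉ MS.Z}) = ⟨μ.comp i.1 hsrc.symm, hkey i hsrc.symm⟩
                ↔ p = i := by
              constructor
              · intro hq
                have hes : μ.es ++ p.1.es = μ.es ++ i.1.es :=
                  congrArg (fun q : {p : QPath Q // p ∉ MS.Z} => q.1.es) hq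
                exact Subtype.ext
                  (QPath.ext' (hp.trans hsrc.symm) (List.append_cancel_left hes))
              · rintro rfl; rfl
            simp [hiff]
          · rw [MS.mul_noncomp ⟨μ, hμz⟩ p (fun c => hp c.symm), heP0 p hp]
            simp
      · have h1 := functional_eq (LinearMap.mulLeft k e) 0 i i ?_ y
        · simp only [LinearMap.mulLeft_apply, LinearMap.zero_apply, map_zero,
            Finsupp.zero_apply] at h1
          rw [hy1] at h1
          exact h1
        · intro p
          simp only [LinearMap.mulLeft_apply, LinearMap.zero_apply, map_zero,
            Finsupp.zero_apply]
          by_cases hp : p.1.src = μ.tgt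
          · rw [heP p hp, Module.Basis.repr_self, Finsupp.single_apply,
              if_neg (fun c : p = i => hsrc (c ▸ hp))]
          · rw [heP0 p hp, map_zero, Finsupp.zero_apply]
    -- Λ is projective over Λᵐᵒᵖ
    haveI hΛproj : Module.Projective Λᵐᵒᵖ Λ :=
      Module.Projective.of_equiv
        ((MulOpposite.opLinearEquiv Λᵐᵒᵖ : Λ ≃ₗ[Λᵐᵒᵖ] Λᵐᵒᵖ).symm)
    -- eΛ is projective
    haveI hEproj : Module.Projective Λᵐᵒᵖ ↥(Submodule.span Λᵐᵒᵖ ({e} : Set Λ)) := by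
      refine Module.Projective.of_split (Submodule.span Λᵐᵒᵖ ({e} : Set Λ)).subtype
        (LinearMap.codRestrict _ (leftMulMap Λ e) (fun x => hEmem x)) ?_
      refine LinearMap.ext fun y => Subtype.ext ?_
      exact hEfix y.1 y.2
    -- left multiplication by μb : eΛ ≃ μΛ
    have hres : ∀ x ∈ Submodule.span Λᵐᵒᵖ ({e} : Set Λ),
        (leftMulMap Λ μb) x ∈ Submodule.span Λᵐᵒᵖ ({μb} : Set Λ) := fun x _ => hMmem x
    have hfbij : Function.Bijective ((leftMulMap Λ μb).restrict hres) := by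
      constructor
      · intro x y hxy
        apply Subtype.ext
        have hval : μb * x.1 = μb * y.1 := congrArg Subtype.val hxy
        have h0 : μb * (x.1 - y.1) = 0 := by rw [mul_sub, hval, sub_self]
        have h1 : e * (x.1 - y.1) = x.1 - y.1 := by
          rw [mul_sub, hEfix _ x.2, hEfix _ y.2]
        exact sub_eq_zero.mp (hinj _ h1 h0)
      · rintro ⟨z, hz⟩
        obtain ⟨c, rfl⟩ := Submodule.mem_span_singleton.mp hz
        refine ⟨⟨c • e, Submodule.smul_mem _ c (Submodule.mem_span_singleton_self e)⟩, ?_⟩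
        apply Subtype.ext
        show μb * (c • e) = c • μb
        rw [MulOpposite.smul_eq_mul_unop, MulOpposite.smul_eq_mul_unop, ← mul_assoc, hμe]
    exact Module.Projective.of_equiv
      (LinearEquiv.ofBijective ((leftMulMap Λ μb).restrict hres) hfbij)
  · -- projective → no right completion
    intro hproj
    rintro ⟨β, hβz, ⟨r, hrc, hrz⟩, -⟩
    have hβsrc : μ.tgt = β.src := hrc.1
    have hβ0 : μb * MS.basis ⟨β, hβz⟩ = 0 :=
      MS.mul_concat_z ⟨μ, hμz⟩ ⟨β, hβz⟩ r hrc hrz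
    -- the canonical surjection Λ → μΛ
    have hssurj : Function.Surjective
        (LinearMap.codRestrict (Submodule.span Λᵐᵒᵖ ({μb} : Set Λ))
          (leftMulMap Λ μb) hMmem) := by
      rintro ⟨z, hz⟩
      obtain ⟨c, rfl⟩ := Submodule.mem_span_singleton.mp hz
      refine ⟨c.unop, Subtype.ext ?_⟩
      show μb * c.unop = c • μb
      rw [MulOpposite.smul_eq_mul_unop]
    haveI := hproj
    obtain ⟨g, hg⟩ := Module.projective_lifting_property
      (LinearMap.codRestrict (Submodule.span Λᵐᵒᵖ ({μb} : Set Λ))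
        (leftMulMap Λ μb) hMmem) LinearMap.id hssurj
    set m : ↥(Submodule.span Λᵐᵒᵖ ({μb} : Set Λ)) :=
      ⟨μb, Submodule.mem_span_singleton_self μb⟩ with hmdef
    have hu : μb * g m = μb := congrArg Subtype.val (DFunLike.congr_fun hg m)
    have hm0 : (MulOpposite.op (MS.basis ⟨β, hβz⟩)) • m = 0 := by
      apply Subtype.ext
      show μb * MS.basis ⟨β, hβz⟩ = 0
      exact hβ0
    have huβ : g m * MS.basis ⟨β, hβz⟩ = 0 := by
      have h2 := map_smul g (MulOpposite.op (MS.basis ⟨β, hβz⟩)) m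
      rw [hm0, map_zero] at h2
      rw [← op_smul_eq_mul]
      exact h2.symm
    -- the contradiction via coordinates
    have hfinal := functional_eq (LinearMap.mulLeft k μb)
      (LinearMap.mulRight k (MS.basis ⟨β, hβz⟩)) ⟨μ, hμz⟩ ⟨β, hβz⟩ ?_ (g m)
    · simp only [LinearMap.mulLeft_apply, LinearMap.mulRight_apply] at hfinal
      rw [hu, huβ, map_zero, Finsupp.zero_apply, hμbdef, Module.Basis.repr_self,
        Finsupp.single_apply, if_pos rfl] at hfinal
      exact one_ne_zero hfinal
    · intro p
      simp only [LinearMap.mulLeft_apply, LinearMap.mulRight_apply]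
      by_cases h0 : p.1.es = []
      · by_cases h1 : p.1.src = μ.tgt
        · have hp : p = ⟨QPath.triv Q μ.tgt, MS.triv_nz μ.tgt⟩ :=
            Subtype.ext (QPath.ext' h1 h0)
          have heβ : e * MS.basis ⟨β, hβz⟩ = MS.basis ⟨β, hβz⟩ :=
            heP ⟨β, hβz⟩ hβsrc.symm
          rw [hp]
          rw [show MS.basis (⟨QPath.triv Q μ.tgt, MS.triv_nz μ.tgt⟩ :
              {p : QPath Q // p ∉ MS.Z}) = e from rfl, hμe, heβ, hμbdef,
            Module.Basis.repr_self, Module.Basis.repr_self, Finsupp.single_apply,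
            Finsupp.single_apply, if_pos rfl, if_pos rfl]
        · rw [MS.mul_noncomp ⟨μ, hμz⟩ p (fun c => h1 c.symm),
            MS.mul_noncomp p ⟨β, hβz⟩ (fun c : p.1.tgt = β.src => h1
              ((QPath.tgt_eq_src_of_nil h0).symm.trans (c.trans hβsrc.symm)))]
          simp
      · have hL : MS.basis.repr (μb * MS.basis p) ⟨μ, hμz⟩ = 0 := by
          by_cases h1 : μ.tgt = p.1.src
          · by_cases h2 : μ.comp p.1 h1 ∈ MS.Z
            · rw [MS.mul_concat_z ⟨μ, hμz⟩ p _ (QConcat_comp μ p.1 h1) h2, map_zero,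
                Finsupp.zero_apply]
            · rw [MS.mul_concat_nz ⟨μ, hμz⟩ p _ (QConcat_comp μ p.1 h1) h2,
                Module.Basis.repr_self, Finsupp.single_apply, if_neg]
              intro hq
              have hes : μ.es ++ p.1.es = μ.es :=
                congrArg (fun q : {p : QPath Q // p ∉ MS.Z} => q.1.es) hq
              exact h0 (List.append_cancel_left
                (hes.trans (List.append_nil μ.es).symm))
          · rw [MS.mul_noncomp ⟨μ, hμz⟩ p h1, map_zero, Finsupp.zero_apply]
        have hR : MS.basis.repr (MS.basis p * MS.basis ⟨β, hβz⟩) ⟨β, hβz⟩ = 0 := by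
          by_cases h1 : p.1.tgt = β.src
          · by_cases h2 : p.1.comp β h1 ∈ MS.Z
            · rw [MS.mul_concat_z p ⟨β, hβz⟩ _ (QConcat_comp p.1 β h1) h2, map_zero,
                Finsupp.zero_apply]
            · rw [MS.mul_concat_nz p ⟨β, hβz⟩ _ (QConcat_comp p.1 β h1) h2,
                Module.Basis.repr_self, Finsupp.single_apply, if_neg]
              intro hq
              have hes : p.1.es ++ β.es = β.es :=
                congrArg (fun q : {p : QPath Q // p ∉ MS.Z} => q.1.es) hq
              have hlen := congrArg List.length hes
              rw [List.length_append] at hlen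
              exact h0 (List.length_eq_zero_iff.mp (by omega))
          · rw [MS.mul_noncomp p ⟨β, hβz⟩ h1, map_zero, Finsupp.zero_apply]
        rw [hL, hR]
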